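/- Let F be the free group on x_1, x_2, x_3 and k = 2: let g : F → Z/2 send each generator to 1, let τ(w)=x_3 w x_3^{-1}, y_1 = x_1 x_3^{-1}, y_2 = x_2 x_3^{-1}, and let Q be the quotient of ker(g) by the normal closure of {x_1^2, x_2^2, x_3^2}. Then Q is a free group of rank 2, freely generated by the images of y_1 and y_2. -/

import Mathlib

/-- `g : F(x₁,x₂,x₃) → Z/2` sending each generator to `1`. -/
def g3 : FreeGroup (Fin 3) →* Multiplicative (ZMod 2) :=
  FreeGroup.lift fun _ => Multiplicative.ofAdd (1 : ZMod 2)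

/-- `y₁ = x₁ x₃⁻¹`. -/
def y1 : FreeGroup (Fin 3) := FreeGroup.of 0 * (FreeGroup.of 2)⁻¹

/-- `y₂ = x₂ x₃⁻¹`. -/
def y2 : FreeGroup (Fin 3) := FreeGroup.of 1 * (FreeGroup.of 2)⁻¹

/-- The normal closure, inside `ker g`, of `{x₁², x₂², x₃²}`. -/
def Nsq : Subgroup (MonoidHom.ker g3) :=
  Subgroup.normalClosure
    {w : MonoidHom.ker g3 | ∃ i : Fin 3, (w : FreeGroup (Fin 3)) = FreeGroup.of i ^ 2}

instance : Nsq.Normal := Subgroup.normalClosure_normal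

namespace Rank2Aux

open FreeGroup

abbrev F3 := FreeGroup (Fin 3)
abbrev F2 := FreeGroup (Fin 2)
abbrev C2 := Multiplicative (ZMod 2)

def cc : C2 := Multiplicative.ofAdd 1

lemma g3_of (i : Fin 3) : g3 (FreeGroup.of i) = cc := FreeGroup.lift_apply_of

/-- inversion endomorphism of F2 -/
def inv2 : F2 →* F2 := FreeGroup.lift fun i => (FreeGroup.of i)⁻¹

lemma inv2_inv2 : inv2.comp inv2 = MonoidHom.id F2 := by
  ext i
  simp [inv2]

/-- the inversion automorphism -/
def ι : MulAut F2 := MonoidHom.toMulEquiv inv2 inv2 inv2_inv2 inv2_inv2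

lemma ι_sq : ι * ι = 1 := by
  ext x
  exact DFunLike.congr_fun inv2_inv2 x

/-- action of C2 on F2 by inversion -/
def act : C2 →* MulAut F2 where
  toFun c := if c = 1 then 1 else ι
  map_one' := by simp
  map_mul' a b := by
    have h : ∀ c : C2, c = 1 ∨ c = cc := by decide
    have h1 : (cc : C2) ≠ 1 := by decide
    rcases h a with ha | ha <;> rcases h b with hb | hb <;>
      subst ha <;> subst hb <;> simp [h1, ι_sq]
    · have : cc * cc = 1 := by decide
      simp [this, ι_sq]

def H := F2 ⋊[act] C2

instance : Group H := inferInstanceAs (Group (F2 ⋊[act] C2))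

def φ : F3 →* F2 ⋊[act] C2 :=
  FreeGroup.lift ![⟨FreeGroup.of 0, cc⟩, ⟨FreeGroup.of 1, cc⟩, ⟨1, cc⟩]

lemma φ_of0 : φ (FreeGroup.of 0) = ⟨FreeGroup.of 0, cc⟩ := by
  simp [φ]

lemma φ_of1 : φ (FreeGroup.of 1) = ⟨FreeGroup.of 1, cc⟩ := by
  simp [φ]

lemma φ_of2 : φ (FreeGroup.of 2) = ⟨1, cc⟩ := by
  simp [φ]

lemma right_φ (w : F3) : (φ w).right = g3 w := by
  have : (SemidirectProduct.rightHom).comp φ = g3 := by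
    ext i
    fin_cases i <;>
      simp [φ_of0, φ_of1, φ_of2, g3_of, SemidirectProduct.rightHom]
  exact DFunLike.congr_fun this w

lemma mem_ker_iff (w : F3) : w ∈ MonoidHom.ker g3 ↔ g3 w = 1 := Iff.rfl

lemma y1_mem : y1 ∈ MonoidHom.ker g3 := by
  have : g3 y1 = 1 := by
    simp [y1, g3_of]
  exact this

lemma y2_mem : y2 ∈ MonoidHom.ker g3 := by
  have : g3 y2 = 1 := by
    simp [y2, g3_of]
  exact this

lemma u1_mem : FreeGroup.of 2 * FreeGroup.of 0 ∈ MonoidHom.ker g3 := by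
  have : g3 (FreeGroup.of (2:Fin 3) * FreeGroup.of 0) = 1 := by
    simp [g3_of]; decide
  exact this

lemma u2_mem : FreeGroup.of 2 * FreeGroup.of 1 ∈ MonoidHom.ker g3 := by
  have : g3 (FreeGroup.of (2:Fin 3) * FreeGroup.of 1) = 1 := by
    simp [g3_of]; decide
  exact this

lemma z3_mem : (FreeGroup.of 2 : F3) ^ 2 ∈ MonoidHom.ker g3 := by
  have : g3 ((FreeGroup.of (2:Fin 3)) ^ 2) = 1 := by
    simp [g3_of]; decide
  exact this

/-- the five Schreier generators of ker g3 -/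
def S : Set F3 :=
  {y1, y2, FreeGroup.of 2 * FreeGroup.of 0, FreeGroup.of 2 * FreeGroup.of 1,
    (FreeGroup.of 2 : F3) ^ 2}

def K : Subgroup F3 := Subgroup.closure S

lemma y1_K : y1 ∈ K := Subgroup.subset_closure (by simp [S])
lemma y2_K : y2 ∈ K := Subgroup.subset_closure (by simp [S])
lemma u1_K : FreeGroup.of 2 * FreeGroup.of 0 ∈ K := Subgroup.subset_closure (by simp [S])
lemma u2_K : FreeGroup.of 2 * FreeGroup.of 1 ∈ K := Subgroup.subset_closure (by simp [S])
lemma z3_K : (FreeGroup.of 2 : F3) ^ 2 ∈ K := Subgroup.subset_closure (by simp [S])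

/-- K is stable under conjugation by x₃. -/
lemma conj_K {w : F3} (hw : w ∈ K) :
    FreeGroup.of 2 * w * (FreeGroup.of 2)⁻¹ ∈ K := by
  induction hw using Subgroup.closure_induction with
  | mem x hx =>
      simp only [S, Set.mem_insert_iff, Set.mem_singleton_iff] at hx
      rcases hx with rfl | rfl | rfl | rfl | rfl
      · have : FreeGroup.of 2 * y1 * (FreeGroup.of 2)⁻¹
            = (FreeGroup.of 2 * FreeGroup.of 0) * ((FreeGroup.of (2:Fin 3)) ^ 2)⁻¹ := by
          rw [y1, pow_two]; group
        rw [this]; exact mul_mem u1_K (inv_mem z3_K)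
      · have : FreeGroup.of 2 * y2 * (FreeGroup.of 2)⁻¹
            = (FreeGroup.of 2 * FreeGroup.of 1) * ((FreeGroup.of (2:Fin 3)) ^ 2)⁻¹ := by
          rw [y2, pow_two]; group
        rw [this]; exact mul_mem u2_K (inv_mem z3_K)
      · have : FreeGroup.of 2 * (FreeGroup.of 2 * FreeGroup.of (0:Fin 3)) * (FreeGroup.of 2)⁻¹
            = ((FreeGroup.of (2:Fin 3)) ^ 2) * y1 := by
          rw [y1, pow_two]; group
        rw [this]; exact mul_mem z3_K y1_K
      · have : FreeGroup.of 2 * (FreeGroup.of 2 * FreeGroup.of (1:Fin 3)) * (FreeGroup.of 2)⁻¹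
            = ((FreeGroup.of (2:Fin 3)) ^ 2) * y2 := by
          rw [y2, pow_two]; group
        rw [this]; exact mul_mem z3_K y2_K
      · have : FreeGroup.of 2 * ((FreeGroup.of (2:Fin 3)) ^ 2) * (FreeGroup.of 2)⁻¹
            = (FreeGroup.of (2:Fin 3)) ^ 2 := by
          rw [pow_two]; group
        rw [this]; exact z3_K
  | one => simpa using one_mem K
  | mul x y hx hy ihx ihy =>
      have : FreeGroup.of 2 * (x * y) * (FreeGroup.of 2)⁻¹
          = (FreeGroup.of 2 * x * (FreeGroup.of 2)⁻¹) *
            (FreeGroup.of 2 * y * (FreeGroup.of 2)⁻¹) := by group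
      rw [this]; exact mul_mem ihx ihy
  | inv x hx ihx =>
      have : FreeGroup.of 2 * x⁻¹ * (FreeGroup.of 2)⁻¹
          = (FreeGroup.of 2 * x * (FreeGroup.of 2)⁻¹)⁻¹ := by group
      rw [this]; exact inv_mem ihx

lemma cc_cases : ∀ a : C2, a = 1 ∨ a = cc := by decide

/-- every element of ker g3 lies in K -/
lemma ker_le_K : MonoidHom.ker g3 ≤ K := by
  intro w hw
  have main : ∀ w : F3, (g3 w = 1 → w ∈ K) ∧ (g3 w ≠ 1 → w * (FreeGroup.of 2)⁻¹ ∈ K) := by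
    intro w
    induction w using FreeGroup.induction_on with
    | C1 => refine ⟨fun _ => one_mem K, fun h => absurd (_root_.map_one g3) h⟩
    | of i =>
        refine ⟨fun h => absurd h (by rw [g3_of]; decide),
          fun _ => ?_⟩
        fin_cases i
        · exact y1_K
        · exact y2_K
        · simpa using one_mem K
    | inv_of i _ =>
        refine ⟨fun h => absurd h (by
            simp [g3_of]; decide), fun _ => ?_⟩
        fin_cases i
        · show (FreeGroup.of (0:Fin 3))⁻¹ * (FreeGroup.of 2)⁻¹ ∈ K
          have : (FreeGroup.of (0:Fin 3))⁻¹ * (FreeGroup.of 2)⁻¹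
              = (FreeGroup.of 2 * FreeGroup.of 0)⁻¹ := by group
          rw [this]; exact inv_mem u1_K
        · show (FreeGroup.of (1:Fin 3))⁻¹ * (FreeGroup.of 2)⁻¹ ∈ K
          have : (FreeGroup.of (1:Fin 3))⁻¹ * (FreeGroup.of 2)⁻¹
              = (FreeGroup.of 2 * FreeGroup.of 1)⁻¹ := by group
          rw [this]; exact inv_mem u2_K
        · show (FreeGroup.of (2:Fin 3))⁻¹ * (FreeGroup.of 2)⁻¹ ∈ K
          have : (FreeGroup.of (2:Fin 3))⁻¹ * (FreeGroup.of 2)⁻¹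
              = ((FreeGroup.of (2:Fin 3)) ^ 2)⁻¹ := by rw [pow_two]; group
          rw [this]; exact inv_mem z3_K
    | mul x y ihx ihy =>
        constructor
        · intro h
          rcases cc_cases (g3 x) with hx | hx <;> rcases cc_cases (g3 y) with hy | hy
          · exact mul_mem (ihx.1 hx) (ihy.1 hy)
          · exfalso; rw [_root_.map_mul, hx, hy] at h; exact absurd h (by decide)
          · exfalso; rw [_root_.map_mul, hx, hy] at h; exact absurd h (by decide)
          · have hx' := ihx.2 (by rw [hx]; decide)
            have hy' := ihy.2 (by rw [hy]; decide)
            have : x * y = (x * (FreeGroup.of 2)⁻¹) *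
                (FreeGroup.of 2 * (y * (FreeGroup.of 2)⁻¹) * (FreeGroup.of 2)⁻¹) *
                ((FreeGroup.of (2:Fin 3)) ^ 2) := by group
            rw [this]
            exact mul_mem (mul_mem hx' (conj_K hy')) z3_K
        · intro h
          rcases cc_cases (g3 x) with hx | hx <;> rcases cc_cases (g3 y) with hy | hy
          · exfalso; rw [_root_.map_mul, hx, hy] at h; exact absurd rfl h
          · have hx' := ihx.1 hx
            have hy' := ihy.2 (by rw [hy]; decide)
            have : x * y * (FreeGroup.of 2)⁻¹ = x * (y * (FreeGroup.of 2)⁻¹) := by group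
            rw [this]; exact mul_mem hx' hy'
          · have hx' := ihx.2 (by rw [hx]; decide)
            have hy' := ihy.1 hy
            have : x * y * (FreeGroup.of 2)⁻¹ = (x * (FreeGroup.of 2)⁻¹) *
                (FreeGroup.of 2 * y * (FreeGroup.of 2)⁻¹) := by group
            rw [this]; exact mul_mem hx' (conj_K hy')
          · exfalso; rw [_root_.map_mul, hx, hy] at h
            exact absurd h (by decide)
  exact (main w).1 hw

abbrev Kg := MonoidHom.ker g3
abbrev Q := Kg ⧸ Nsq

def π : Kg →* Q := QuotientGroup.mk' Nsq

def y1' : Kg := ⟨y1, y1_mem⟩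
def y2' : Kg := ⟨y2, y2_mem⟩
def u1' : Kg := ⟨_, u1_mem⟩
def u2' : Kg := ⟨_, u2_mem⟩
def z3' : Kg := ⟨_, z3_mem⟩

lemma π_z3' : π z3' = 1 := by
  rw [π, QuotientGroup.mk'_apply, QuotientGroup.eq_one_iff]
  exact Subgroup.subset_normalClosure ⟨2, rfl⟩

lemma π_u1' : π u1' = (π y1')⁻¹ := by
  have hval : ((y1' * u1' : Kg) : F3) = FreeGroup.of (0:Fin 3) ^ 2 := by
    show y1 * (FreeGroup.of 2 * FreeGroup.of 0) = _
    rw [y1, pow_two]; group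
  have hmem : y1' * u1' ∈ Nsq := Subgroup.subset_normalClosure ⟨0, hval⟩
  have h1 : π y1' * π u1' = 1 := by
    rw [← _root_.map_mul, π, QuotientGroup.mk'_apply, QuotientGroup.eq_one_iff]
    exact hmem
  exact eq_inv_of_mul_eq_one_right h1

lemma π_u2' : π u2' = (π y2')⁻¹ := by
  have hval : ((y2' * u2' : Kg) : F3) = FreeGroup.of (1:Fin 3) ^ 2 := by
    show y2 * (FreeGroup.of 2 * FreeGroup.of 1) = _
    rw [y2, pow_two]; group
  have hmem : y2' * u2' ∈ Nsq := Subgroup.subset_normalClosure ⟨1, hval⟩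
  have h1 : π y2' * π u2' = 1 := by
    rw [← _root_.map_mul, π, QuotientGroup.mk'_apply, QuotientGroup.eq_one_iff]
    exact hmem
  exact eq_inv_of_mul_eq_one_right h1

lemma cc_ne_one : (cc : C2) ≠ 1 := by decide

lemma act_cc : act cc = ι := by
  simp [act, cc_ne_one]

lemma ι_of (i : Fin 2) : ι (FreeGroup.of i) = (FreeGroup.of i)⁻¹ := by
  show inv2 (FreeGroup.of i) = _
  simp [inv2]

/-- the left-projection homomorphism on ker g3 -/
def ψ : Kg →* F2 where
  toFun w := (φ (w : F3)).left
  map_one' := by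
    show (φ ((1 : Kg) : F3)).left = 1
    rw [OneMemClass.coe_one, _root_.map_one, SemidirectProduct.one_left]
  map_mul' a b := by
    have hr : (φ (a : F3)).right = 1 := by rw [right_φ]; exact a.2
    show (φ ((a : F3) * (b : F3))).left = _
    rw [_root_.map_mul, SemidirectProduct.mul_left, hr, _root_.map_one]
    rfl

lemma φ_sq (i : Fin 3) : φ (FreeGroup.of i ^ 2) = 1 := by
  have hcc : (cc : C2) * cc = 1 := by decide
  rw [pow_two, _root_.map_mul]
  fin_cases i
  · show φ (FreeGroup.of 0) * φ (FreeGroup.of 0) = 1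
    rw [φ_of0]
    show (⟨FreeGroup.of 0 * act cc (FreeGroup.of 0), cc * cc⟩ : F2 ⋊[act] C2) = 1
    rw [act_cc, ι_of, mul_inv_cancel, hcc]; rfl
  · show φ (FreeGroup.of 1) * φ (FreeGroup.of 1) = 1
    rw [φ_of1]
    show (⟨FreeGroup.of 1 * act cc (FreeGroup.of 1), cc * cc⟩ : F2 ⋊[act] C2) = 1
    rw [act_cc, ι_of, mul_inv_cancel, hcc]; rfl
  · show φ (FreeGroup.of 2) * φ (FreeGroup.of 2) = 1
    rw [φ_of2]
    show (⟨1 * act cc 1, cc * cc⟩ : F2 ⋊[act] C2) = 1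
    rw [hcc, _root_.map_one, mul_one]; rfl

lemma ψ_ker : Nsq ≤ ψ.ker := by
  apply Subgroup.normalClosure_le_normal
  rintro w ⟨i, hi⟩
  show ψ w = 1
  show (φ (w : F3)).left = 1
  rw [hi, φ_sq, SemidirectProduct.one_left]

def ψbar : Q →* F2 := QuotientGroup.lift Nsq ψ ψ_ker

lemma φ_y1 : φ y1 = ⟨FreeGroup.of 0, 1⟩ := by
  have hcc : (cc : C2)⁻¹ = cc := by decide
  have hcc2 : (cc : C2) * cc = 1 := by decide
  rw [y1, _root_.map_mul, _root_.map_inv, φ_of0]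
  have hinv : (φ (FreeGroup.of 2))⁻¹ = (⟨1, cc⟩ : F2 ⋊[act] C2) := by
    rw [φ_of2]
    ext
    · rw [SemidirectProduct.inv_left]
      simp
    · rw [SemidirectProduct.inv_right]
      show (cc : C2)⁻¹ = cc
      exact hcc
  rw [hinv]
  show (⟨FreeGroup.of 0 * act cc 1, cc * cc⟩ : F2 ⋊[act] C2) = _
  rw [hcc2, _root_.map_one, mul_one]

lemma φ_y2 : φ y2 = ⟨FreeGroup.of 1, 1⟩ := by
  have hcc : (cc : C2)⁻¹ = cc := by decide
  have hcc2 : (cc : C2) * cc = 1 := by decide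
  rw [y2, _root_.map_mul, _root_.map_inv, φ_of1]
  have hinv : (φ (FreeGroup.of 2))⁻¹ = (⟨1, cc⟩ : F2 ⋊[act] C2) := by
    rw [φ_of2]
    ext
    · rw [SemidirectProduct.inv_left]
      simp
    · rw [SemidirectProduct.inv_right]
      exact hcc
  rw [hinv]
  show (⟨FreeGroup.of 1 * act cc 1, cc * cc⟩ : F2 ⋊[act] C2) = _
  rw [hcc2, _root_.map_one, mul_one]

lemma ψ_y1' : ψ y1' = FreeGroup.of 0 := by
  show (φ y1).left = _
  rw [φ_y1]

lemma ψ_y2' : ψ y2' = FreeGroup.of 1 := by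
  show (φ y2).left = _
  rw [φ_y2]

def e' : F2 →* Q := FreeGroup.lift ![π y1', π y2']

lemma e'_of0 : e' (FreeGroup.of 0) = π y1' := by simp [e']
lemma e'_of1 : e' (FreeGroup.of 1) = π y2' := by simp [e']

lemma ψbar_π (w : Kg) : ψbar (π w) = ψ w := rfl

lemma gen (q : Q) : q ∈ Subgroup.closure {π y1', π y2'} := by
  obtain ⟨w, rfl⟩ := QuotientGroup.mk'_surjective Nsq q
  show π w ∈ Subgroup.closure {π y1', π y2'}
  have hw : w ∈ (Subgroup.closure {π y1', π y2'}).comap π := by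
    have hK : (w : F3) ∈ K := ker_le_K w.2
    have hle : K ≤ Subgroup.map (MonoidHom.ker g3).subtype
        ((Subgroup.closure {π y1', π y2'}).comap π) := by
      rw [K, Subgroup.closure_le]
      rintro x hx
      simp only [S, Set.mem_insert_iff, Set.mem_singleton_iff] at hx
      simp only [SetLike.mem_coe, Subgroup.mem_map, Subgroup.mem_comap,
        Subgroup.coe_subtype]
      rcases hx with rfl | rfl | rfl | rfl | rfl
      · exact ⟨y1', Subgroup.subset_closure (by simp), rfl⟩
      · exact ⟨y2', Subgroup.subset_closure (by simp), rfl⟩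
      · exact ⟨u1', by rw [π_u1']; exact inv_mem (Subgroup.subset_closure (by simp)), rfl⟩
      · exact ⟨u2', by rw [π_u2']; exact inv_mem (Subgroup.subset_closure (by simp)), rfl⟩
      · exact ⟨z3', by rw [π_z3']; exact one_mem _, rfl⟩
    obtain ⟨m, hm, hmw⟩ := hle hK
    rwa [show m = w from Subtype.ext hmw] at hm
  exact hw

lemma left_comp : ψbar.comp e' = MonoidHom.id F2 := by
  ext i
  fin_cases i
  · show ψbar (e' (FreeGroup.of 0)) = FreeGroup.of 0
    rw [e'_of0, ψbar_π, ψ_y1']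
  · show ψbar (e' (FreeGroup.of 1)) = FreeGroup.of 1
    rw [e'_of1, ψbar_π, ψ_y2']

lemma right_inv_e' (q : Q) : e' (ψbar q) = q := by
  induction gen q using Subgroup.closure_induction with
  | mem x hx =>
      rcases hx with rfl | hx
      · rw [ψbar_π, ψ_y1', e'_of0]
      · rw [Set.mem_singleton_iff] at hx
        subst hx
        rw [ψbar_π, ψ_y2', e'_of1]
  | one => simp
  | mul x y hx hy ihx ihy => rw [_root_.map_mul, _root_.map_mul, ihx, ihy]
  | inv x hx ihx => rw [_root_.map_inv, _root_.map_inv, ihx]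

def E : F2 ≃* Q where
  toFun := e'
  invFun := ψbar
  left_inv := fun x => DFunLike.congr_fun left_comp x
  right_inv := right_inv_e'
  map_mul' := e'.map_mul

end Rank2Aux

/-- case `n = 2`, `k = 2`: `Q = ker(g)/⟪x₁², x₂², x₃²⟫` is a free
group of rank `2`, freely generated by the images of `y₁` and `y₂`. -/
theorem quotient_free_rank_two :
    ∃ e : FreeGroup (Fin 2) ≃* (MonoidHom.ker g3 ⧸ Nsq),
      (∀ w : MonoidHom.ker g3, (w : FreeGroup (Fin 3)) = y1 →
        e (FreeGroup.of 0) = QuotientGroup.mk w) ∧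
      ∀ w : MonoidHom.ker g3, (w : FreeGroup (Fin 3)) = y2 →
        e (FreeGroup.of 1) = QuotientGroup.mk w := by
  refine ⟨Rank2Aux.E, fun w hw => ?_, fun w hw => ?_⟩
  · have : w = Rank2Aux.y1' := Subtype.ext hw
    subst this
    show Rank2Aux.e' (FreeGroup.of 0) = _
    rw [Rank2Aux.e'_of0]
    rfl
  · have : w = Rank2Aux.y2' := Subtype.ext hw
    subst this
    show Rank2Aux.e' (FreeGroup.of 1) = _
    rw [Rank2Aux.e'_of1]
    rfl
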